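/- If V(S,P) is the Ohmic-drop voltage (OCV + √(OCV² − 4PR₀))/2 where OCV is constant, then for P ∈ [0, P_max] with P_max < OCV²/(4R₀), the function P ↦ 1/V(S,P) is convex and increasing in P. -/

import Mathlib

open Real Set

lemma one_div_combo_le (X Y a b : ℝ) (hX : 0 < X) (hY : 0 < Y) (ha : 0 ≤ a)
    (hb : 0 ≤ b) (hab : a + b = 1) (hm : 0 < a * X + b * Y) :
    1 / (a * X + b * Y) ≤ a * (1 / X) + b * (1 / Y) := by
  rw [mul_one_div, mul_one_div, div_add_div _ _ hX.ne' hY.ne',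
    div_le_div_iff₀ hm (by positivity)]
  have h1 : (a + b) ^ 2 = 1 := by rw [hab]; norm_num
  nlinarith [mul_nonneg (mul_nonneg ha hb) (sq_nonneg (X - Y)), mul_pos hX hY, h1]

theorem stmt_7 (OCV R₀ Pmax : ℝ) (hOCV : 0 < OCV) (hR : 0 < R₀)
    (hPmax : 0 ≤ Pmax) (hPmax' : Pmax < OCV ^ 2 / (4 * R₀)) :
    let f := fun P : ℝ => 1 / ((OCV + Real.sqrt (OCV ^ 2 - 4 * P * R₀)) / 2)
    ConvexOn ℝ (Set.Icc 0 Pmax) f ∧ MonotoneOn f (Set.Icc 0 Pmax) := by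
  intro f
  -- positivity of the argument of sqrt on the interval
  have harg : ∀ P ∈ Set.Icc 0 Pmax, 0 ≤ OCV ^ 2 - 4 * P * R₀ := by
    intro P hP
    have h1 : P ≤ Pmax := hP.2
    have h2 : Pmax * (4 * R₀) < OCV ^ 2 := by
      have := (lt_div_iff₀ (by positivity)).mp hPmax'
      linarith
    nlinarith
  have hgpos : ∀ P ∈ Set.Icc 0 Pmax,
      0 < OCV + Real.sqrt (OCV ^ 2 - 4 * P * R₀) := by
    intro P hP
    have := Real.sqrt_nonneg (OCV ^ 2 - 4 * P * R₀)
    linarith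
  constructor
  · refine ⟨convex_Icc 0 Pmax, ?_⟩
    intro x hx y hy a b ha hb hab
    have hxy : a • x + b • y ∈ Set.Icc 0 Pmax :=
      (convex_Icc 0 Pmax) hx hy ha hb hab
    set u := OCV ^ 2 - 4 * x * R₀ with hu
    set v := OCV ^ 2 - 4 * y * R₀ with hv
    have hu0 : 0 ≤ u := harg x hx
    have hv0 : 0 ≤ v := harg y hy
    -- concavity of sqrt
    have hconc : a * Real.sqrt u + b * Real.sqrt v ≤ Real.sqrt (a * u + b * v) := by
      have := Real.strictConcaveOn_sqrt.concaveOn.2 hu0 hv0 ha hb hab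
      simpa using this
    have harglin : OCV ^ 2 - 4 * (a • x + b • y) * R₀ = a * u + b * v := by
      simp only [smul_eq_mul, hu, hv]; ring_nf; nlinarith [hab]
    have hgz : a * (OCV + Real.sqrt u) + b * (OCV + Real.sqrt v) ≤
        OCV + Real.sqrt (OCV ^ 2 - 4 * (a • x + b • y) * R₀) := by
      rw [harglin]; nlinarith [hconc]
    have hgx : 0 < OCV + Real.sqrt u := hgpos x hx
    have hgy : 0 < OCV + Real.sqrt v := hgpos y hy
    have hmid : 0 < a * (OCV + Real.sqrt u) + b * (OCV + Real.sqrt v) := by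
      rcases ha.lt_or_eq with h | h
      · nlinarith [mul_nonneg hb hgy.le]
      · have hb1 : b = 1 := by linarith
        nlinarith
    have hgz0 : 0 < OCV + Real.sqrt (OCV ^ 2 - 4 * (a • x + b • y) * R₀) :=
      hgpos _ hxy
    -- f z ≤ 1/((a gx + b gy)/2) ≤ a f x + b f y
    have step1 : f (a • x + b • y) ≤
        1 / ((a * (OCV + Real.sqrt u) + b * (OCV + Real.sqrt v)) / 2) := by
      apply one_div_le_one_div_of_le (by linarith)
      linarith
    have step2 : 1 / ((a * (OCV + Real.sqrt u) + b * (OCV + Real.sqrt v)) / 2) ≤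
        a * (1 / ((OCV + Real.sqrt u) / 2)) + b * (1 / ((OCV + Real.sqrt v) / 2)) := by
      have := one_div_combo_le ((OCV + Real.sqrt u) / 2) ((OCV + Real.sqrt v) / 2) a b
        (by linarith) (by linarith) ha hb hab (by linarith)
      calc 1 / ((a * (OCV + Real.sqrt u) + b * (OCV + Real.sqrt v)) / 2)
          = 1 / (a * ((OCV + Real.sqrt u) / 2) + b * ((OCV + Real.sqrt v) / 2)) := by
            ring_nf
        _ ≤ _ := this
    calc f (a • x + b • y) ≤ _ := step1
      _ ≤ _ := step2
      _ = a • f x + b • f y := by simp [f, smul_eq_mul, hu, hv]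
  · intro x hx y hy hxy
    have h1 : Real.sqrt (OCV ^ 2 - 4 * y * R₀) ≤ Real.sqrt (OCV ^ 2 - 4 * x * R₀) := by
      apply Real.sqrt_le_sqrt; nlinarith [hR]
    have hgy := hgpos y hy
    apply one_div_le_one_div_of_le (by linarith)
    linarith
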